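/- Let g : [0,1] → [0,1] be nondecreasing with g(1) = 1. Then min over θ ∈ [0,1] of (∫₀^θ g(y) dy + 1 - g(θ)) is maximized (over all such g) at value 1 - 1/e, achieved by g(y) = e^{y-1}. -/

import Mathlib

open Set intervalIntegral

/-- Over all nondecreasing `g : [0,1] → [0,1]` with `g 1 = 1`, the quantity
`min_{θ∈[0,1]} (∫₀^θ g(y) dy + 1 - g(θ))` is maximized at value `1 - 1/e`,
achieved by `g(y) = e^{y-1}`: the exponential choice attains value `1 - 1/e` at every
`θ ∈ [0,1]`, while for any admissible `g` some `θ ∈ [0,1]` gives value at most `1 - 1/e`. -/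
theorem stmt_2 :
    (∀ θ ∈ Set.Icc (0:ℝ) 1,
        (∫ y in (0:ℝ)..θ, Real.exp (y - 1)) + 1 - Real.exp (θ - 1) = 1 - 1 / Real.exp 1) ∧
    (∀ g : ℝ → ℝ, MonotoneOn g (Set.Icc (0:ℝ) 1) →
        (∀ y ∈ Set.Icc (0:ℝ) 1, g y ∈ Set.Icc (0:ℝ) 1) → g 1 = 1 →
        ∃ θ ∈ Set.Icc (0:ℝ) 1,
          (∫ y in (0:ℝ)..θ, g y) + 1 - g θ ≤ 1 - 1 / Real.exp 1) := by
  constructor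
  · intro θ _
    have : (∫ y in (0:ℝ)..θ, Real.exp (y - 1)) = Real.exp (θ - 1) - Real.exp (0 - 1) := by
      simpa using intervalIntegral.integral_comp_sub_right (fun y => Real.exp y) 1 (a := 0) (b := θ)
    rw [this, zero_sub, Real.exp_neg, one_div]; ring
  · intro g hmono hrange hg1
    by_contra hcon
    push_neg at hcon
    set G : ℝ → ℝ := fun θ => ∫ y in (0:ℝ)..θ, g y with hGdef
    have key : ∀ θ ∈ Icc (0:ℝ) 1, g θ < G θ + 1 / Real.exp 1 := by
      intro θ hθ
      have := hcon θ hθ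
      simp only [hGdef]
      linarith
    have hint : ∀ a b : ℝ, a ∈ Icc (0:ℝ) 1 → b ∈ Icc (0:ℝ) 1 →
        IntervalIntegrable g MeasureTheory.volume a b := by
      intro a b ha hb
      refine MonotoneOn.intervalIntegrable (hmono.mono ?_)
      rw [← uIcc_of_le (zero_le_one : (0:ℝ) ≤ 1)]
      exact uIcc_subset_uIcc (by rw [uIcc_of_le zero_le_one]; exact ha)
        (by rw [uIcc_of_le zero_le_one]; exact hb)
    have hcont : ContinuousOn G (Icc (0:ℝ) 1) := by
      have h01 : uIcc (0:ℝ) 1 = Icc (0:ℝ) 1 := uIcc_of_le zero_le_one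
      have := intervalIntegral.continuousOn_primitive_interval'
        (f := g) (μ := MeasureTheory.volume) (b₁ := 0) (b₂ := 1)
        (hint 0 1 (by norm_num) (by norm_num)) (a := 0) (by rw [h01]; exact ⟨le_refl _, zero_le_one⟩)
      rwa [h01] at this
    -- Grönwall
    have grb := le_gronwallBound_of_liminf_deriv_right_le
      (f := G) (f' := fun x => G x + 1 / Real.exp 1) (δ := 0) (K := 1) (ε := 1 / Real.exp 1)
      (a := 0) (b := 1) hcont ?_ ?_ ?_ 1 (by constructor <;> norm_num)
    · have hb : gronwallBound 0 1 (1 / Real.exp 1) (1 - 0) = 1 - 1 / Real.exp 1 := by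
        rw [gronwallBound_of_K_ne_0 one_ne_zero]
        have := Real.exp_ne_zero 1
        field_simp
        simp
      rw [hb] at grb
      have h1 := hcon 1 (by constructor <;> norm_num)
      rw [hg1] at h1
      simp only [hGdef] at grb
      linarith
    · -- liminf slope condition
      intro x hx r hr
      have hx01 : x ∈ Icc (0:ℝ) 1 := ⟨hx.1, le_of_lt hx.2⟩
      have hIoc : Ioc x 1 ∈ nhdsWithin x (Ioi x) := Ioc_mem_nhdsGT_of_mem ⟨le_refl x, hx.2⟩
      have hcw : Filter.Tendsto G (nhdsWithin x (Ioi x)) (nhds (G x)) := by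
        have h1 : ContinuousWithinAt G (Ioc x 1) x :=
          (hcont.continuousWithinAt hx01).mono (fun z hz => ⟨le_trans hx.1 (le_of_lt hz.1), hz.2⟩)
        exact h1.mono_left (nhdsWithin_le_of_mem hIoc)
      have hev : ∀ᶠ z in nhdsWithin x (Ioi x), G z + 1 / Real.exp 1 < r := by
        have : ∀ᶠ z in nhdsWithin x (Ioi x), G z < r - 1 / Real.exp 1 :=
          hcw.eventually (Filter.Tendsto.eventually_lt_const (by linarith) Filter.tendsto_id)
        filter_upwards [this] with z hz; linarith
      have hmem : ∀ᶠ z in nhdsWithin x (Ioi x), z ∈ Ioc x 1 := hIoc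
      refine ((hev.and hmem).mono ?_).frequently
      intro z ⟨hzr, hzI⟩
      have hxz : x < z := hzI.1
      have hz01 : z ∈ Icc (0:ℝ) 1 := ⟨le_trans hx.1 (le_of_lt hxz), hzI.2⟩
      have hGzx : G z - G x = ∫ y in x..z, g y := by
        have := intervalIntegral.integral_add_adjacent_intervals
          (hint 0 x (by norm_num) hx01) (hint x z hx01 hz01)
        simp only [hGdef]; linarith
      have hle : (∫ y in x..z, g y) ≤ (z - x) * g z := by
        have h1 : (∫ y in x..z, g y) ≤ ∫ _ in x..z, g z := by
          apply intervalIntegral.integral_mono_on (le_of_lt hxz) (hint x z hx01 hz01)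
            intervalIntegrable_const
          intro t ht
          exact hmono ⟨le_trans hx.1 ht.1, le_trans ht.2 hzI.2⟩ hz01 ht.2
        simpa [smul_eq_mul] using h1
      have hslope : (z - x)⁻¹ * (G z - G x) ≤ g z := by
        rw [hGzx]
        have hpos : (0:ℝ) < z - x := by linarith
        calc (z - x)⁻¹ * (∫ y in x..z, g y) ≤ (z - x)⁻¹ * ((z - x) * g z) := by
              apply mul_le_mul_of_nonneg_left hle (le_of_lt (inv_pos.2 hpos))
          _ = g z := by field_simp
      have := key z hz01
      linarith
    · simp [hGdef]
    · intro x _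
      linarith
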